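/- Let Φ be a Riesz basis for a Hilbert space H with canonical dual Φ̃. Then the map O ↦ (⟨O φ̃_n, φ_m⟩)_{m,n} is a Banach algebra isomorphism from B(H) onto B(ℓ²) mapping Id_H to Id_{ℓ²}, i.e., it is bijective, multiplicative, and unital. -/

import Mathlib

open scoped InnerProductSpace

noncomputable section

local notation "ℓ²" => lp (fun _ : ℕ => ℂ) 2

variable {H₁ H₂ H₃ : Type*}
  [NormedAddCommGroup H₁] [InnerProductSpace ℂ H₁] [CompleteSpace H₁]
  [NormedAddCommGroup H₂] [InnerProductSpace ℂ H₂] [CompleteSpace H₂]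
  [NormedAddCommGroup H₃] [InnerProductSpace ℂ H₃] [CompleteSpace H₃]

/-- `ψ` is a Bessel sequence with bound `B`:  `∑ₖ |⟨f, ψₖ⟩|² ≤ B ‖f‖²`.
(Note: the paper's `⟨f, ψₖ⟩`, linear in `f`, is Mathlib's `⟪ψ k, f⟫_ℂ`.) -/
def IsBessel {H : Type*} [NormedAddCommGroup H] [InnerProductSpace ℂ H]
    (ψ : ℕ → H) (B : ℝ) : Prop :=
  ∀ f : H, Summable (fun k => ‖⟪ψ k, f⟫_ℂ‖ ^ 2) ∧
    ∑' k, ‖⟪ψ k, f⟫_ℂ‖ ^ 2 ≤ B * ‖f‖ ^ 2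

/-- `ψ` is a frame with bounds `A`, `B`:  `A ‖f‖² ≤ ∑ₖ |⟨f, ψₖ⟩|² ≤ B ‖f‖²`. -/
def IsFrame {H : Type*} [NormedAddCommGroup H] [InnerProductSpace ℂ H]
    (ψ : ℕ → H) (A B : ℝ) : Prop :=
  0 < A ∧ ∀ f : H, Summable (fun k => ‖⟪ψ k, f⟫_ℂ‖ ^ 2) ∧
    A * ‖f‖ ^ 2 ≤ ∑' k, ‖⟪ψ k, f⟫_ℂ‖ ^ 2 ∧
    ∑' k, ‖⟪ψ k, f⟫_ℂ‖ ^ 2 ≤ B * ‖f‖ ^ 2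

/-- `C` is the analysis operator of `ψ`:  `C f = (⟨f, ψₖ⟩)ₖ`. -/
def IsAnalysis {H : Type*} [NormedAddCommGroup H] [InnerProductSpace ℂ H]
    (ψ : ℕ → H) (C : H →L[ℂ] ℓ²) : Prop :=
  ∀ (f : H) (k : ℕ), C f k = ⟪ψ k, f⟫_ℂ

/-- `D` is the synthesis operator of `ψ`:  `D c = ∑ₖ cₖ ψₖ`. -/
def IsSynthesis {H : Type*} [NormedAddCommGroup H] [InnerProductSpace ℂ H]
    (ψ : ℕ → H) (D : ℓ² →L[ℂ] H) : Prop :=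
  ∀ c : ℓ², HasSum (fun k => c k • ψ k) (D c)

/-- `S` is the frame operator of `ψ`:  `S f = ∑ₖ ⟨f, ψₖ⟩ ψₖ`. -/
def IsFrameOp {H : Type*} [NormedAddCommGroup H] [InnerProductSpace ℂ H]
    (ψ : ℕ → H) (S : H →L[ℂ] H) : Prop :=
  ∀ f : H, HasSum (fun k => ⟪ψ k, f⟫_ℂ • ψ k) (S f)

/-- `dψ` is the canonical dual of `ψ`, whose frame operator is `S`: `dψ k = S⁻¹ ψ k`. -/
def IsCanonicalDual {H : Type*} [NormedAddCommGroup H] [InnerProductSpace ℂ H]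
    (ψ : ℕ → H) (S : H →L[ℂ] H) (dψ : ℕ → H) : Prop :=
  IsFrameOp ψ S ∧ ∀ k, S (dψ k) = ψ k

/-- `ψ` is a Riesz basis with bounds `A`, `B`: it is complete and
`A ∑|cₖ|² ≤ ‖∑ cₖ ψₖ‖² ≤ B ∑|cₖ|²` for all finite sequences `c`. -/
def IsRieszBasis {H : Type*} [NormedAddCommGroup H] [InnerProductSpace ℂ H]
    (ψ : ℕ → H) (A B : ℝ) : Prop :=
  0 < A ∧ (Submodule.span ℂ (Set.range ψ)).topologicalClosure = ⊤ ∧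
    ∀ c : ℕ →₀ ℂ,
      A * ∑ k ∈ c.support, ‖c k‖ ^ 2 ≤ ‖∑ k ∈ c.support, c k • ψ k‖ ^ 2 ∧
      ‖∑ k ∈ c.support, c k • ψ k‖ ^ 2 ≤ B * ∑ k ∈ c.support, ‖c k‖ ^ 2

section Aux

variable {H : Type*} [NormedAddCommGroup H] [InnerProductSpace ℂ H] [CompleteSpace H]
variable {φ : ℕ → H} {A B : ℝ}

private lemma rpow_two_eq (x : ℝ) : x ^ (2:ℝ) = x ^ (2:ℕ) := by
  rw [show (2:ℝ) = ((2:ℕ):ℝ) by norm_num, Real.rpow_natCast]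

private lemma l2_hasSum_sq (c : ℓ²) : HasSum (fun k => ‖c k‖ ^ 2) (‖c‖ ^ 2) := by
  have h := lp.hasSum_norm (p := 2) (by norm_num) c
  simp only [ENNReal.toReal_ofNat, rpow_two_eq] at h
  exact h

private lemma l2_summable_sq (c : ℓ²) : Summable (fun k => ‖c k‖ ^ 2) :=
  (l2_hasSum_sq c).summable

private lemma riesz_finset (hΦ : IsRieszBasis φ A B) (c : ℕ → ℂ) (F : Finset ℕ) :
    A * ∑ k ∈ F, ‖c k‖ ^ 2 ≤ ‖∑ k ∈ F, c k • φ k‖ ^ 2 ∧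
      ‖∑ k ∈ F, c k • φ k‖ ^ 2 ≤ B * ∑ k ∈ F, ‖c k‖ ^ 2 := by
  classical
  set c' : ℕ →₀ ℂ := Finsupp.onFinset F (fun k => if k ∈ F then c k else 0)
    (fun k hk => by by_contra h; simp [h] at hk) with hc'
  have hsupp : c'.support ⊆ F := Finsupp.support_onFinset_subset
  have happ : ∀ k ∈ F, c' k = c k := fun k hk => by simp [hc', Finsupp.onFinset_apply, hk]
  have h1 : ∑ k ∈ c'.support, c' k • φ k = ∑ k ∈ F, c k • φ k := by
    rw [Finset.sum_subset hsupp (fun k _ hk' => by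
      simp [Finsupp.notMem_support_iff.mp hk'])]
    exact Finset.sum_congr rfl fun k hk => by rw [happ k hk]
  have h2 : ∑ k ∈ c'.support, ‖c' k‖ ^ 2 = ∑ k ∈ F, ‖c k‖ ^ 2 := by
    rw [Finset.sum_subset hsupp (fun k _ hk' => by
      simp [Finsupp.notMem_support_iff.mp hk'])]
    exact Finset.sum_congr rfl fun k hk => by rw [happ k hk]
  have := hΦ.2.2 c'
  rw [h1, h2] at this
  exact this

private lemma riesz_B_pos (hΦ : IsRieszBasis φ A B) : 0 < B := by
  have h := riesz_finset hΦ (fun _ => 1) {0}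
  simp only [Finset.sum_singleton, norm_one, one_pow, mul_one, one_smul] at h
  have h0 : (0:ℝ) ≤ ‖φ 0‖ ^ 2 := by positivity
  nlinarith [hΦ.1]

private lemma riesz_summable (hΦ : IsRieszBasis φ A B) (c : ℓ²) :
    Summable (fun k => c k • φ k) := by
  have hB := riesz_B_pos hΦ
  rw [summable_iff_vanishing_norm]
  intro ε hε
  obtain ⟨s, hs⟩ := summable_iff_vanishing_norm.mp (l2_summable_sq c) (ε ^ 2 / B)
    (by positivity)
  refine ⟨s, fun t ht => ?_⟩
  have h1 := (riesz_finset hΦ (fun k => c k) t).2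
  have h2 := hs t ht
  have h3 : ∑ k ∈ t, ‖c k‖ ^ 2 ≤ |∑ k ∈ t, ‖c k‖ ^ 2| := le_abs_self _
  rw [Real.norm_eq_abs] at h2
  have h4 : ‖∑ k ∈ t, c k • φ k‖ ^ 2 < ε ^ 2 := by
    calc ‖∑ k ∈ t, c k • φ k‖ ^ 2 ≤ B * ∑ k ∈ t, ‖c k‖ ^ 2 := h1
    _ < B * (ε ^ 2 / B) := by
        apply mul_lt_mul_of_pos_left (lt_of_le_of_lt h3 h2) hB
    _ = ε ^ 2 := by field_simp
  exact lt_of_pow_lt_pow_left₀ 2 hε.le h4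

end Aux

section T
variable {H : Type*} [NormedAddCommGroup H] [InnerProductSpace ℂ H] [CompleteSpace H]
variable {φ : ℕ → H} {A B : ℝ}

private def synthL (hΦ : IsRieszBasis φ A B) : ℓ² →ₗ[ℂ] H where
  toFun c := ∑' k, c k • φ k
  map_add' c d := by
    have h := (riesz_summable hΦ c).hasSum.add (riesz_summable hΦ d).hasSum
    have hfun : (fun k => c k • φ k + d k • φ k) = fun k => (c + d) k • φ k := by
      funext k
      rw [lp.coeFn_add, Pi.add_apply, add_smul]
    rw [hfun] at h
    exact h.tsum_eq
  map_smul' a c := by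
    have h := (riesz_summable hΦ c).hasSum.const_smul a
    have hfun : (fun k => a • (c k • φ k)) = fun k => (a • c) k • φ k := by
      funext k
      rw [lp.coeFn_smul, Pi.smul_apply, smul_smul, smul_eq_mul]
    rw [hfun] at h
    rw [RingHom.id_apply]
    exact h.tsum_eq

private lemma synthL_hasSum (hΦ : IsRieszBasis φ A B) (c : ℓ²) :
    HasSum (fun k => c k • φ k) (synthL hΦ c) :=
  (riesz_summable hΦ c).hasSum

private lemma synthL_bound (hΦ : IsRieszBasis φ A B) (c : ℓ²) :
    ‖synthL hΦ c‖ ≤ Real.sqrt B * ‖c‖ := by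
  have hB := riesz_B_pos hΦ
  refine le_of_tendsto (synthL_hasSum hΦ c).norm (Filter.Eventually.of_forall fun F => ?_)
  have h1 := (riesz_finset hΦ (fun k => c k) F).2
  have h2 : ∑ k ∈ F, ‖c k‖ ^ 2 ≤ ‖c‖ ^ 2 := by
    exact sum_le_hasSum F (fun k _ => by positivity) (l2_hasSum_sq c)
  refine le_of_pow_le_pow_left₀ two_ne_zero (by positivity) ?_
  calc ‖∑ k ∈ F, c k • φ k‖ ^ 2 ≤ B * ‖c‖ ^ 2 := by nlinarith
  _ = (Real.sqrt B * ‖c‖) ^ 2 := by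
      rw [mul_pow, Real.sq_sqrt hB.le]

private def synth (hΦ : IsRieszBasis φ A B) : ℓ² →L[ℂ] H :=
  LinearMap.mkContinuous (synthL hΦ) (Real.sqrt B) (synthL_bound hΦ)

private lemma synth_hasSum (hΦ : IsRieszBasis φ A B) (c : ℓ²) :
    HasSum (fun k => c k • φ k) (synth hΦ c) :=
  synthL_hasSum hΦ c

private lemma synth_lower (hΦ : IsRieszBasis φ A B) (c : ℓ²) :
    A * ‖c‖ ^ 2 ≤ ‖synth hΦ c‖ ^ 2 := by
  have h1 : Filter.Tendsto (fun F : Finset ℕ => ∑ k ∈ F, A * ‖c k‖ ^ 2)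
      Filter.atTop (nhds (A * ‖c‖ ^ 2)) := (l2_hasSum_sq c).mul_left A
  simp only [← Finset.mul_sum] at h1
  have h2 : Filter.Tendsto (fun F : Finset ℕ => ∑ k ∈ F, c k • φ k)
      Filter.atTop (nhds (synth hΦ c)) := synth_hasSum hΦ c
  have h3 := (h2.norm).pow 2
  exact le_of_tendsto_of_tendsto' h1 h3 (fun F => (riesz_finset hΦ (fun k => c k) F).1)

private lemma synth_anti (hΦ : IsRieszBasis φ A B) (c : ℓ²) :
    ‖c‖ ≤ (Real.sqrt A)⁻¹ * ‖synth hΦ c‖ := by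
  have hA := hΦ.1
  have hs : (0:ℝ) < Real.sqrt A := Real.sqrt_pos.mpr hA
  have h : (Real.sqrt A * ‖c‖) ^ 2 ≤ ‖synth hΦ c‖ ^ 2 := by
    rw [mul_pow, Real.sq_sqrt hA.le]
    exact synth_lower hΦ c
  have h2 : Real.sqrt A * ‖c‖ ≤ ‖synth hΦ c‖ :=
    le_of_pow_le_pow_left₀ two_ne_zero (norm_nonneg _) h
  rw [inv_mul_eq_div, le_div_iff₀ hs]
  linarith

private lemma synth_single (hΦ : IsRieszBasis φ A B) (k : ℕ) :
    synth hΦ (lp.single 2 k (1:ℂ)) = φ k := by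
  have hfun : (fun j => ((lp.single 2 k (1:ℂ) : ℓ²)) j • φ j)
      = fun j => if j = k then φ k else 0 := by
    funext j
    rcases eq_or_ne j k with rfl | h
    · simp [lp.single_apply_self]
    · rw [lp.single_apply_ne 2 k _ h, if_neg h, zero_smul]
  refine (synth_hasSum hΦ _).unique ?_
  rw [hfun]
  exact hasSum_ite_eq k (φ k)

end T

section T2
variable {H : Type*} [NormedAddCommGroup H] [InnerProductSpace ℂ H] [CompleteSpace H]
variable {φ : ℕ → H} {A B : ℝ}

private lemma synth_inj (hΦ : IsRieszBasis φ A B) : Function.Injective (synth hΦ) := by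
  have hA := hΦ.1
  intro c d h
  have h2 := synth_anti hΦ (c - d)
  rw [map_sub, h, sub_self, norm_zero, mul_zero] at h2
  rw [← sub_eq_zero, ← norm_le_zero_iff]
  exact h2

private lemma synth_antilip (hΦ : IsRieszBasis φ A B) :
    AntilipschitzWith ⟨(Real.sqrt A)⁻¹, by positivity⟩ (synth hΦ) :=
  ContinuousLinearMap.antilipschitz_of_bound _ (synth_anti hΦ)

private lemma synth_range (hΦ : IsRieszBasis φ A B) :
    LinearMap.range (synth hΦ : ℓ² →ₗ[ℂ] H) = ⊤ := by
  have hclosed : IsClosed ((LinearMap.range (synth hΦ : ℓ² →ₗ[ℂ] H) : Submodule ℂ H) : Set H) := by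
    rw [LinearMap.coe_range]
    exact (synth_antilip hΦ).isClosed_range (synth hΦ).uniformContinuous
  have hle : Submodule.span ℂ (Set.range φ) ≤ LinearMap.range (synth hΦ : ℓ² →ₗ[ℂ] H) := by
    rw [Submodule.span_le]
    rintro _ ⟨k, rfl⟩
    exact ⟨lp.single 2 k (1:ℂ), synth_single hΦ k⟩
  have := (Submodule.span ℂ (Set.range φ)).topologicalClosure_minimal hle hclosed
  rw [hΦ.2.1] at this
  exact top_le_iff.mp this

private def synthEquiv (hΦ : IsRieszBasis φ A B) : ℓ² ≃L[ℂ] H :=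
  ContinuousLinearEquiv.ofBijective (synth hΦ)
    (LinearMap.ker_eq_bot.mpr (synth_inj hΦ)) (synth_range hΦ)

private lemma synthEquiv_coe (hΦ : IsRieszBasis φ A B) (c : ℓ²) :
    synthEquiv hΦ c = synth hΦ c := rfl

/-- analysis operator `C = T†`. -/
private def ana (hΦ : IsRieszBasis φ A B) : H →L[ℂ] ℓ² :=
  ContinuousLinearMap.adjoint (synth hΦ)

/-- dual synthesis operator `D = (T.symm)†`. -/
private def dsynth (hΦ : IsRieszBasis φ A B) : ℓ² →L[ℂ] H :=
  ContinuousLinearMap.adjoint ((synthEquiv hΦ).symm : H →L[ℂ] ℓ²)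

private lemma ana_comp_dsynth (hΦ : IsRieszBasis φ A B) :
    (ana hΦ).comp (dsynth hΦ) = ContinuousLinearMap.id ℂ ℓ² := by
  have h : (((synthEquiv hΦ).symm : H →L[ℂ] ℓ²).comp (synth hΦ))
      = ContinuousLinearMap.id ℂ ℓ² :=
    ContinuousLinearMap.ext fun c => (synthEquiv hΦ).symm_apply_apply c
  rw [ana, dsynth, ← ContinuousLinearMap.adjoint_comp, h, ContinuousLinearMap.adjoint_id]

private lemma dsynth_comp_ana (hΦ : IsRieszBasis φ A B) :
    (dsynth hΦ).comp (ana hΦ) = ContinuousLinearMap.id ℂ H := by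
  have h : ((synth hΦ).comp ((synthEquiv hΦ).symm : H →L[ℂ] ℓ²))
      = ContinuousLinearMap.id ℂ H :=
    ContinuousLinearMap.ext fun f => (synthEquiv hΦ).apply_symm_apply f
  rw [ana, dsynth, ← ContinuousLinearMap.adjoint_comp, h, ContinuousLinearMap.adjoint_id]

private lemma ana_apply (hΦ : IsRieszBasis φ A B) (f : H) (m : ℕ) :
    ana hΦ f m = ⟪φ m, f⟫_ℂ := by
  have h1 : ⟪(lp.single 2 m (1:ℂ) : ℓ²), ana hΦ f⟫_ℂ = ana hΦ f m := by
    rw [lp.inner_single_left]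
    simp
  rw [← h1, ana, ContinuousLinearMap.adjoint_inner_right, synth_single hΦ m]

end T2

section T3
variable {H : Type*} [NormedAddCommGroup H] [InnerProductSpace ℂ H] [CompleteSpace H]
variable {φ : ℕ → H} {A B : ℝ}

private lemma dsynth_ana (hΦ : IsRieszBasis φ A B) (f : H) :
    dsynth hΦ (ana hΦ f) = f := by
  have h := DFunLike.congr_fun (dsynth_comp_ana hΦ) f
  simpa using h

private lemma ana_dsynth (hΦ : IsRieszBasis φ A B) (c : ℓ²) :
    ana hΦ (dsynth hΦ c) = c := by
  have h := DFunLike.congr_fun (ana_comp_dsynth hΦ) c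
  simpa using h

private lemma ana_inj (hΦ : IsRieszBasis φ A B) : Function.Injective (ana hΦ) :=
  Function.LeftInverse.injective (dsynth_ana hΦ)

/-- `S = T ∘ T*` pointwise, given that `S` is the frame operator. -/
private lemma frameOp_eq (hΦ : IsRieszBasis φ A B) {S : H →L[ℂ] H}
    (hS : ∀ f : H, HasSum (fun k => ⟪φ k, f⟫_ℂ • φ k) (S f)) (f : H) :
    S f = synth hΦ (ana hΦ f) := by
  refine (hS f).unique ?_
  have h := synth_hasSum hΦ (ana hΦ f)
  have hfun : (fun k => (ana hΦ f) k • φ k) = fun k => ⟪φ k, f⟫_ℂ • φ k := by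
    funext k; rw [ana_apply]
  rwa [hfun] at h

private lemma dual_eq (hΦ : IsRieszBasis φ A B) {S : H →L[ℂ] H} {dφ : ℕ → H}
    (hS : ∀ f : H, HasSum (fun k => ⟪φ k, f⟫_ℂ • φ k) (S f))
    (hd : ∀ k, S (dφ k) = φ k) (k : ℕ) :
    dφ k = dsynth hΦ (lp.single 2 k (1:ℂ)) := by
  have h1 : ana hΦ (dφ k) = lp.single 2 k (1:ℂ) := by
    apply synth_inj hΦ
    rw [← frameOp_eq hΦ hS, hd k, synth_single]
  rw [← h1, dsynth_ana]

private lemma dsynth_hasSum (hΦ : IsRieszBasis φ A B) {dφ : ℕ → H}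
    (hdφ : ∀ k, dφ k = dsynth hΦ (lp.single 2 k (1:ℂ))) (c : ℓ²) :
    HasSum (fun n => c n • dφ n) (dsynth hΦ c) := by
  have h := (lp.hasSum_single (E := fun _ : ℕ => ℂ) (p := 2) (by norm_num) c).mapL (dsynth hΦ)
  have hfun : (fun n => dsynth hΦ (lp.single 2 n (c n))) = fun n => c n • dφ n := by
    funext n
    rw [hdφ n, ← map_smul, ← lp.single_smul, smul_eq_mul, mul_one]
  rwa [hfun] at h

end T3

/-- For a Riesz basis `φ` with canonical dual `dφ`, the map
`O ↦ (⟨O φ̃ₙ, φₘ⟩)ₘₙ` is a Banach algebra isomorphism from `B(H)` onto `B(ℓ²)`: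
bijective, linear, multiplicative and unital. -/
theorem stmt14 {φ : ℕ → H₁} {A B : ℝ}
    (hΦ : IsRieszBasis φ A B)
    (S : H₁ →L[ℂ] H₁) (dφ : ℕ → H₁) (hdΦ : IsCanonicalDual φ S dφ)
    (𝓜 : (H₁ →L[ℂ] H₁) → (ℓ² →L[ℂ] ℓ²))
    (h𝓜 : ∀ (O : H₁ →L[ℂ] H₁) (c : ℓ²) (m : ℕ),
      𝓜 O c m = ∑' n, ⟪φ m, O (dφ n)⟫_ℂ * c n) :
    Function.Bijective 𝓜 ∧
    (∀ (a : ℂ) (O P : H₁ →L[ℂ] H₁), 𝓜 (a • O + P) = a • 𝓜 O + 𝓜 P) ∧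
    (∀ O P : H₁ →L[ℂ] H₁, 𝓜 (O.comp P) = (𝓜 O).comp (𝓜 P)) ∧
    𝓜 (ContinuousLinearMap.id ℂ H₁) = ContinuousLinearMap.id ℂ ℓ² := by
  set C := ana hΦ with hC
  set D := dsynth hΦ with hD
  have hdφ : ∀ k, dφ k = D (lp.single 2 k (1:ℂ)) := dual_eq hΦ hdΦ.1 hdΦ.2
  have hDsum : ∀ c : ℓ², HasSum (fun n => c n • dφ n) (D c) := dsynth_hasSum hΦ hdφ
  have hCapp : ∀ (f : H₁) (m : ℕ), C f m = ⟪φ m, f⟫_ℂ := ana_apply hΦ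
  have hCD : ∀ c : ℓ², C (D c) = c := ana_dsynth hΦ
  have hDC : ∀ f : H₁, D (C f) = f := dsynth_ana hΦ
  -- the key factorization
  have key : ∀ O : H₁ →L[ℂ] H₁, 𝓜 O = C.comp (O.comp D) := by
    intro O
    refine ContinuousLinearMap.ext fun c => ?_
    refine lp.ext (funext fun m => ?_)
    have h1 : HasSum (fun n => ⟪φ m, O (dφ n)⟫_ℂ * c n) ⟪φ m, O (D c)⟫_ℂ := by
      have := (hDsum c).mapL ((innerSL ℂ (φ m)).comp O)
      simpa [mul_comm] using this
    show 𝓜 O c m = (C (O (D c))) m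
    rw [h𝓜 O c m, hCapp]
    exact h1.tsum_eq
  have hCinj : Function.Injective C := Function.LeftInverse.injective hDC
  refine ⟨⟨?_, ?_⟩, ?_, ?_, ?_⟩
  · intro O O' h
    refine ContinuousLinearMap.ext fun f => ?_
    have h1 := DFunLike.congr_fun h (C f)
    rw [key O, key O'] at h1
    simp only [ContinuousLinearMap.comp_apply, hDC f] at h1
    exact hCinj h1
  · intro Q
    refine ⟨D.comp (Q.comp C), ?_⟩
    rw [key]
    refine ContinuousLinearMap.ext fun c => ?_
    simp only [ContinuousLinearMap.comp_apply, hCD]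
  · intro a O P
    rw [key, key, key]
    refine ContinuousLinearMap.ext fun c => ?_
    simp only [ContinuousLinearMap.comp_apply, ContinuousLinearMap.add_apply,
      ContinuousLinearMap.smul_apply, map_add, map_smul]
  · intro O P
    rw [key, key, key]
    refine ContinuousLinearMap.ext fun c => ?_
    simp only [ContinuousLinearMap.comp_apply, hDC]
  · rw [key]
    refine ContinuousLinearMap.ext fun c => ?_
    simp only [ContinuousLinearMap.comp_apply, ContinuousLinearMap.id_apply, hCD]
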